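/- Let (M, γ) be a topological group with subgroups X and G such that algebraically M is the internal semidirect product X ⋊ G (i.e., X is normal in M, X ∩ G = {e}, and XG = M), and assume that X with the subspace topology γ|_X is compact. Endow G with the topology γ/X obtained by identifying G with the coset space M/X (with its quotient topology) via the canonical projection. Then the conjugation action α : (G, γ/X) × (X, γ|_X) → (X, γ|_X), α(g, x) = g x g⁻¹, is continuous at the point (e_G, e_X). -/

import Mathlib

open scoped Topology

/-- Uniform smallness of conjugation over a compact set: if `K` is compact and `S` is a
neighborhood of `1`, there is a neighborhood `V` of `1` with `x * v * x⁻¹ ∈ S` for all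
`x ∈ K`, `v ∈ V`. -/
theorem exists_nhds_one_conj_subset {M : Type*} [Group M] [TopologicalSpace M]
    [IsTopologicalGroup M] {K : Set M} (hK : IsCompact K) {S : Set M}
    (hS : S ∈ 𝓝 (1 : M)) :
    ∃ V ∈ 𝓝 (1 : M), ∀ x ∈ K, ∀ v ∈ V, x * v * x⁻¹ ∈ S := by
  have hcont : ∀ x : M, ContinuousAt (fun p : M × M => p.1 * p.2 * p.1⁻¹) (x, 1) := by
    intro x
    exact ((continuous_fst.mul continuous_snd).mul continuous_fst.inv).continuousAt
  -- for each x, get open U_x ∋ x and V_x ∈ 𝓝 1 with conj small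
  have key : ∀ x : M, ∃ U : Set M, IsOpen U ∧ x ∈ U ∧ ∃ V ∈ 𝓝 (1 : M),
      ∀ u ∈ U, ∀ v ∈ V, u * v * u⁻¹ ∈ S := by
    intro x
    have h := hcont x
    have h1 : (fun p : M × M => p.1 * p.2 * p.1⁻¹) (x, 1) = 1 := by simp
    have h2 : (fun p : M × M => p.1 * p.2 * p.1⁻¹) ⁻¹' S ∈ 𝓝 (x, 1) := by
      apply h
      rw [h1]; exact hS
    rcases mem_nhds_prod_iff.1 h2 with ⟨U, hU, V, hV, hUV⟩
    rcases mem_nhds_iff.1 hU with ⟨U', hU'U, hU'open, hxU'⟩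
    exact ⟨U', hU'open, hxU', V, hV, fun u hu v hv =>
      hUV (Set.mk_mem_prod (hU'U hu) hv)⟩
  choose U hUopen hxU V hV hconj using key
  rcases hK.elim_finite_subcover U hUopen (fun x hx => Set.mem_iUnion.2 ⟨x, hxU x⟩)
    with ⟨t, ht⟩
  refine ⟨⋂ x ∈ t, V x, (Filter.biInter_finset_mem t).2 fun x _ => hV x, ?_⟩
  intro x hx v hv
  rcases Set.mem_iUnion₂.1 (ht hx) with ⟨y, hyt, hxy⟩
  exact hconj y x hxy v (Set.mem_iInter₂.1 hv y hyt)

/-- Let `(M, γ)` be a (Hausdorff) topological group and let `X, G` be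
subgroups of `M` such that `M` is algebraically the internal semidirect product `X ⋊ G`
(`X` is normal, `X ∩ G = {e}` and `X·G = M`), and assume `X` is compact.  Endowing `G`
with the topology `γ/X` induced from the quotient `M/X` via the canonical identification
`g ↦ gX`, the conjugation action `α : G × X → X`, `α(g, x) = g x g⁻¹`, is continuous at
the point `(e_G, e_X)`. -/
theorem conjugation_continuousAt_of_compact_kernel {M : Type*}
    [Group M] [TopologicalSpace M] [IsTopologicalGroup M] [T2Space M]
    (X G : Subgroup M) (hN : X.Normal)
    (hdisj : X ⊓ G = ⊥)
    (hgen : ∀ m : M, ∃ x ∈ X, ∃ g ∈ G, m = x * g)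
    (hcpt : IsCompact (X : Set M)) :
    @ContinuousAt (↥G × ↥X) ↥X
      (@instTopologicalSpaceProd ↥G ↥X
        (TopologicalSpace.induced (fun g : ↥G => ((g : M) : M ⧸ X)) inferInstance)
        inferInstance)
      inferInstance
      (fun p : ↥G × ↥X => (⟨(p.1 : M) * (p.2 : M) * (p.1 : M)⁻¹,
        hN.conj_mem _ p.2.2 _⟩ : ↥X))
      (1, 1) := by
  letI tG : TopologicalSpace ↥G :=
    TopologicalSpace.induced (fun g : ↥G => ((g : M) : M ⧸ X)) inferInstance
  rw [ContinuousAt]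
  rw [Filter.tendsto_def]
  intro W hW
  -- f (1,1) = 1
  have hval : (⟨(1 : M) * (1 : M) * (1 : M)⁻¹, by simpa using X.one_mem⟩ : ↥X) = 1 := by
    ext; simp
  -- W corresponds to a nbhd of 1 in M
  have hW' : W ∈ 𝓝 (1 : ↥X) := by convert hW using 2; ext; simp
  rw [nhds_induced] at hW'
  rcases hW' with ⟨W₀, hW₀, hW₀sub⟩
  -- get S with S * S * S⁻¹ ⊆ W₀
  have hcontS : ContinuousAt (fun p : M × M × M => p.1 * p.2.1 * p.2.2⁻¹)
      ((1 : M), (1 : M), (1 : M)) :=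
    ((continuous_fst.mul (continuous_snd.fst)).mul
      (continuous_snd.snd.inv)).continuousAt
  have h1 : (fun p : M × M × M => p.1 * p.2.1 * p.2.2⁻¹) (1, 1, 1) = 1 := by simp
  have hS0 : (fun p : M × M × M => p.1 * p.2.1 * p.2.2⁻¹) ⁻¹' W₀ ∈
      𝓝 ((1 : M), (1 : M), (1 : M)) := by
    apply hcontS; rw [h1]; exact hW₀
  rcases mem_nhds_prod_iff.1 hS0 with ⟨A, hA, BC, hBC, hABC⟩
  rcases mem_nhds_prod_iff.1 hBC with ⟨B, hB, C, hC, hBCsub⟩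
  set S := A ∩ B ∩ C with hSdef
  have hSnhds : S ∈ 𝓝 (1 : M) := Filter.inter_mem (Filter.inter_mem hA hB) hC
  have hSsub : ∀ a ∈ S, ∀ b ∈ S, ∀ c ∈ S, a * b * c⁻¹ ∈ W₀ := by
    intro a ha b hb c hc
    exact hABC (Set.mk_mem_prod ha.1.1 (hBCsub (Set.mk_mem_prod hb.1.2 hc.2)))
  -- open S' ⊆ S containing 1
  rcases mem_nhds_iff.1 hSnhds with ⟨S', hS'S, hS'open, h1S'⟩
  -- V from compactness
  rcases exists_nhds_one_conj_subset hcpt hSnhds with ⟨V, hVnhds, hVconj⟩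
  -- build the neighborhood in G × X and conclude
  rw [mem_nhds_prod_iff]
  refine ⟨(fun g : ↥G => ((g : M) : M ⧸ X)) ⁻¹' ((QuotientGroup.mk '' S')), ?_, ?_⟩
  · rw [nhds_induced]
    refine Filter.mem_comap.2 ⟨QuotientGroup.mk '' S', ?_, le_refl _⟩
    exact (QuotientGroup.isOpenMap_coe S' hS'open).mem_nhds ⟨1, h1S', by simp⟩
  refine ⟨(Subtype.val : ↥X → M) ⁻¹' V, ?_, ?_⟩
  · rw [nhds_induced]
    exact Filter.mem_comap.2 ⟨V, by simpa using hVnhds, le_refl _⟩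
  rintro ⟨g, v⟩ ⟨hg, hv⟩
  simp only [Set.mem_preimage] at hg hv
  rcases hg with ⟨n, hnS', hn⟩
  -- g = n * x with x ∈ X
  have hx : (n : M)⁻¹ * (g : M) ∈ X := by
    have := QuotientGroup.eq.1 hn
    exact this
  set x : M := (n : M)⁻¹ * (g : M) with hxdef
  have hgeq : (g : M) = n * x := by rw [hxdef]; group
  apply hW₀sub
  show ((g : M) * (v : M) * (g : M)⁻¹) ∈ W₀
  have hxconj : x * (v : M) * x⁻¹ ∈ S := hVconj x hx (v : M) hv
  have : (g : M) * (v : M) * (g : M)⁻¹ = n * (x * (v : M) * x⁻¹) * n⁻¹ := by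
    rw [hgeq]; group
  rw [this]
  exact hSsub n (hS'S hnS') _ hxconj n (hS'S hnS')
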